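/- Suppose the probabilistic forecast F is non-random (a fixed continuous cdf on ℝ). Then F is marginally tail calibrated for Y if and only if x_F = x_Y and lim_{t → x_Y} P(Y > t)/(1 − F(t)) = 1. -/

import Mathlib

open MeasureTheory ProbabilityTheory Filter Set Topology

noncomputable section

/-- Conditional probability of a set given a sub-σ-algebra, as a real-valued function. -/
def condProb {Ω : Type*} {m0 : MeasurableSpace Ω} (μ : Measure Ω) (m : MeasurableSpace Ω)
    (A : Set Ω) : Ω → ℝ :=
  μ[A.indicator (fun _ => (1 : ℝ))|m]

/-- The conditional forecast excess distribution `F_t`. -/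
def excessCdf (F : ℝ → ℝ) (t x : ℝ) : ℝ :=
  if F t < 1 then (F (x + t) - F t) / (1 - F t) else 1

/-- The excess probability integral transform `Z_F^{(t)}`. -/
def excessPIT {Ω : Type*} (F : Ω → ℝ → ℝ) (Y : Ω → ℝ) (t : ℝ) (ω : Ω) : ℝ :=
  excessCdf (F ω) t (Y ω - t)

/-- Upper endpoint `x_Y = sup {x : P(Y ≤ x) < 1}` of the outcome, in `EReal`. -/
def upperEndpoint {Ω : Type*} {mΩ : MeasurableSpace Ω} (μ : Measure Ω) (Y : Ω → ℝ) : EReal :=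
  sSup (Real.toEReal '' {x : ℝ | μ {ω | Y ω ≤ x} < 1})

/-- Upper endpoint of a (deterministic) cdf. -/
def cdfEndpoint (F : ℝ → ℝ) : EReal :=
  sSup (Real.toEReal '' {x : ℝ | F x < 1})

/-- The filter of real `t` tending to an extended-real endpoint `e` from below. -/
def toEndpoint (e : EReal) : Filter ℝ :=
  Filter.comap Real.toEReal (𝓝[<] e)

/-- `F` is a random cdf: measurable in `ω`, and almost surely a continuous cdf. -/
def IsRandomCdf {Ω : Type*} {mΩ : MeasurableSpace Ω} (μ : Measure Ω) (F : Ω → ℝ → ℝ) : Prop :=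
  (∀ x : ℝ, Measurable fun ω => F ω x) ∧
    ∀ᵐ ω ∂μ, Monotone (F ω) ∧ Continuous (F ω) ∧
      Tendsto (F ω) atTop (𝓝 1) ∧ Tendsto (F ω) atBot (𝓝 0)

/-- The endpoint assumption for a sub-σ-algebra `m`: the conditional distribution of `Y`
given `m` has (non-random) upper endpoint `x_Y`. -/
def EndpointAssumption {Ω : Type*} {m0 : MeasurableSpace Ω} (μ : Measure Ω)
    (m : MeasurableSpace Ω) (Y : Ω → ℝ) : Prop :=
  (∀ t : ℝ, (t : EReal) < upperEndpoint μ Y →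
      ∀ᵐ ω ∂μ, 0 < condProb μ m {ω' | t < Y ω'} ω) ∧
    ∀ᵐ ω ∂μ, condProb μ m {ω' | upperEndpoint μ Y < (Y ω' : EReal)} ω = 0

/-- `F` is tail `m`-calibrated for `Y`. -/
def TailCalibrated {Ω : Type*} {m0 : MeasurableSpace Ω} (μ : Measure Ω)
    (m : MeasurableSpace Ω) (F : Ω → ℝ → ℝ) (Y : Ω → ℝ) : Prop :=
  (∀ t : ℝ, (t : EReal) < upperEndpoint μ Y →
      ∀ᵐ ω ∂μ, 0 < (μ[fun ω' => 1 - F ω' t|m]) ω) ∧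
    ∀ u ∈ Icc (0 : ℝ) 1, ∀ᵐ ω ∂μ,
      Tendsto (fun t : ℝ =>
          condProb μ m {ω' | excessPIT F Y t ω' ≤ u ∧ t < Y ω'} ω /
            (μ[fun ω' => 1 - F ω' t|m]) ω)
        (toEndpoint (upperEndpoint μ Y)) (𝓝 u)

/-- `F` is probabilistically tail calibrated for `Y`. -/
def ProbTailCalibrated {Ω : Type*} {mΩ : MeasurableSpace Ω} (μ : Measure Ω)
    (F : Ω → ℝ → ℝ) (Y : Ω → ℝ) : Prop :=
  (∀ t : ℝ, (t : EReal) < upperEndpoint μ Y → 0 < ∫ ω, (1 - F ω t) ∂μ) ∧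
    ∀ u ∈ Icc (0 : ℝ) 1,
      Tendsto (fun t : ℝ =>
          (μ {ω | excessPIT F Y t ω ≤ u ∧ t < Y ω}).toReal / ∫ ω, (1 - F ω t) ∂μ)
        (toEndpoint (upperEndpoint μ Y)) (𝓝 u)

/-- `F` is marginally tail calibrated for `Y`. -/
def MargTailCalibrated {Ω : Type*} {mΩ : MeasurableSpace Ω} (μ : Measure Ω)
    (F : Ω → ℝ → ℝ) (Y : Ω → ℝ) : Prop :=
  (∀ t : ℝ, (t : EReal) < upperEndpoint μ Y → 0 < ∫ ω, (1 - F ω t) ∂μ) ∧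
    Tendsto (fun t : ℝ =>
        ⨆ x : Ici (0 : ℝ),
          |(μ {ω | t < Y ω ∧ Y ω ≤ t + (x : ℝ)}).toReal / (∫ ω, (1 - F ω t) ∂μ) -
            (∫ ω in {ω' | t < Y ω'}, excessCdf (F ω) t (x : ℝ) ∂μ) /
              (μ {ω' | t < Y ω'}).toReal|)
      (toEndpoint (upperEndpoint μ Y)) (𝓝 0)

/-- Generalized Pareto survival function `(1 + ξ x)₊^(-1/ξ)` with unit scale and shape `ξ`,
interpreted as `exp (-x)` when `ξ = 0`. -/
def gpdSurv (ξ x : ℝ) : ℝ :=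
  if ξ = 0 then Real.exp (-x) else (max (1 + ξ * x) 0) ^ (-(1 : ℝ) / ξ)

section Aux
variable {Ω : Type*} {m0 : MeasurableSpace Ω} {μ : Measure Ω} [IsProbabilityMeasure μ]
  {Y : Ω → ℝ}

lemma mtc_lt_upperEndpoint_iff (hY : Measurable Y) {t : ℝ} :
    (t : EReal) < upperEndpoint μ Y ↔ μ {ω | Y ω ≤ t} < 1 := by
  constructor
  · intro h
    rw [upperEndpoint, lt_sSup_iff] at h
    obtain ⟨b, hb, htb⟩ := h
    obtain ⟨x, hx, rfl⟩ := hb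
    exact lt_of_le_of_lt
      (measure_mono fun ω hω => le_trans hω (EReal.coe_lt_coe_iff.mp htb).le) hx
  · intro h
    have hmono : Antitone fun n : ℕ => {ω | Y ω ≤ t + 1/(n+1)} := by
      intro n m hnm ω hω
      refine le_trans hω (add_le_add_right ?_ t)
      apply one_div_le_one_div_of_le
      · positivity
      · exact_mod_cast add_le_add_left (Nat.cast_le.mpr hnm) 1
    have hinter : (⋂ n : ℕ, {ω | Y ω ≤ t + 1/(n+1)}) = {ω | Y ω ≤ t} := by
      ext ω
      simp only [mem_iInter, mem_setOf_eq]
      constructor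
      · intro h'
        by_contra hc
        push_neg at hc
        obtain ⟨n, hn⟩ := exists_nat_one_div_lt (show (0:ℝ) < Y ω - t by linarith)
        have := h' n
        linarith
      · intro h' n
        have : (0:ℝ) < 1/(n+1) := by positivity
        linarith
    have hten : Tendsto (fun n : ℕ => μ {ω | Y ω ≤ t + 1/(n+1)}) atTop
        (𝓝 (μ (⋂ n : ℕ, {ω | Y ω ≤ t + 1/(n+1)}))) :=
      tendsto_measure_iInter_atTop (fun n => (hY measurableSet_Iic).nullMeasurableSet)
        hmono ⟨0, measure_ne_top μ _⟩
    rw [hinter] at hten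
    obtain ⟨n, hn⟩ := (hten.eventually_lt_const h).exists
    have h1 : (t : EReal) < ((t + 1/(n+1) : ℝ) : EReal) := by
      rw [EReal.coe_lt_coe_iff]
      have : (0:ℝ) < 1/(n+1) := by positivity
      linarith
    exact lt_of_lt_of_le h1 (le_sSup ⟨_, hn, rfl⟩)

lemma mtc_bot_lt (hY : Measurable Y) : (⊥ : EReal) < upperEndpoint μ Y := by
  have hinter : (⋂ n : ℕ, {ω | Y ω ≤ -(n:ℝ)}) = ∅ := by
    ext ω
    simp only [mem_iInter, mem_setOf_eq, mem_empty_iff_false, iff_false, not_forall, not_le]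
    obtain ⟨n, hn⟩ := exists_nat_gt (-(Y ω))
    exact ⟨n, by linarith⟩
  have hten : Tendsto (fun n : ℕ => μ {ω | Y ω ≤ -(n:ℝ)}) atTop
      (𝓝 (μ (⋂ n : ℕ, {ω | Y ω ≤ -(n:ℝ)}))) :=
    tendsto_measure_iInter_atTop (fun n => (hY measurableSet_Iic).nullMeasurableSet)
      (fun n m hnm ω h => show Y ω ≤ -(n:ℝ) from le_trans (show Y ω ≤ -(m:ℝ) from h) (neg_le_neg (Nat.cast_le.mpr hnm)))
      ⟨0, measure_ne_top μ _⟩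
  rw [hinter, measure_empty] at hten
  obtain ⟨n, hn⟩ := (hten.eventually_lt_const (show (0:ENNReal) < 1 by norm_num)).exists
  exact lt_of_lt_of_le (EReal.bot_lt_coe (-(n:ℝ))) (le_sSup ⟨_, hn, rfl⟩)

lemma mtc_compl (hY : Measurable Y) (t : ℝ) :
    μ {ω | t < Y ω} = 1 - μ {ω | Y ω ≤ t} := by
  have hset : {ω | t < Y ω} = {ω | Y ω ≤ t}ᶜ := by
    ext ω; simp [not_le]
  rw [hset]
  exact prob_compl_eq_one_sub (hY measurableSet_Iic)

lemma mtc_mu_pos (hY : Measurable Y) {t : ℝ} (ht : (t : EReal) < upperEndpoint μ Y) :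
    μ {ω | t < Y ω} ≠ 0 := by
  rw [mtc_compl hY]
  have := (mtc_lt_upperEndpoint_iff hY).mp ht
  exact (tsub_pos_iff_lt.mpr this).ne'

lemma mtc_mu_zero (hY : Measurable Y) {s : ℝ} (hs : upperEndpoint μ Y ≤ (s : EReal)) :
    μ {ω | s < Y ω} = 0 := by
  by_contra h
  have hle : μ {ω | Y ω ≤ s} < 1 := by
    rcases lt_or_eq_of_le (prob_le_one (μ := μ) (s := {ω | Y ω ≤ s})) with h1 | h1
    · exact h1
    · exfalso
      apply h
      rw [mtc_compl hY, h1, tsub_self]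
  exact absurd ((mtc_lt_upperEndpoint_iff hY).mpr hle) (not_lt.mpr hs)

end Aux

lemma mtc_eventually_toEndpoint {e : EReal} (he : (⊥:EReal) < e) {p : ℝ → Prop} :
    (∀ᶠ t in toEndpoint e, p t) ↔
      ∃ a : ℝ, (a : EReal) < e ∧ ∀ t : ℝ, a < t → (t : EReal) < e → p t := by
  constructor
  · intro h
    rw [toEndpoint, eventually_comap, eventually_iff,
      mem_nhdsLT_iff_exists_Ioo_subset' he] at h
    obtain ⟨l, hl, hsub⟩ := h
    obtain ⟨c, hc1, hc2⟩ := exists_between he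
    have hcne_top : c ≠ ⊤ := fun hc => not_top_lt (hc ▸ hc2)
    have ha_lt : max l c < e := max_lt hl hc2
    have ha_ne_bot : max l c ≠ ⊥ := fun h' => hc1.ne' (le_bot_iff.mp (h' ▸ le_max_right l c))
    have ha_ne_top : max l c ≠ ⊤ := fun h' => not_top_lt (h' ▸ ha_lt)
    refine ⟨(max l c).toReal, by rwa [EReal.coe_toReal ha_ne_top ha_ne_bot], ?_⟩
    intro t hat hte
    have h1 : max l c < (t : EReal) := by
      rw [← EReal.coe_toReal ha_ne_top ha_ne_bot, EReal.coe_lt_coe_iff]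
      exact hat
    exact hsub ⟨lt_of_le_of_lt (le_max_left l c) h1, hte⟩ t rfl
  · rintro ⟨a, ha, hp⟩
    rw [toEndpoint, eventually_comap]
    filter_upwards [Ioo_mem_nhdsLT ha] with b hb t ht
    subst ht
    exact hp t (EReal.coe_lt_coe_iff.mp hb.1) hb.2

lemma mtc_nhdsLT_le (y : ℝ) : 𝓝[<] y ≤ toEndpoint (y : EReal) := by
  rw [toEndpoint, ← Filter.map_le_iff_le_comap]
  apply tendsto_nhdsWithin_of_tendsto_nhds_of_eventually_within
  · exact (continuous_coe_real_ereal.tendsto y).mono_left nhdsWithin_le_nhds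
  · filter_upwards [self_mem_nhdsWithin] with t ht
    exact EReal.coe_lt_coe_iff.mpr ht


/-- a non-random continuous forecast cdf is marginally tail calibrated for `Y`
if and only if `x_F = x_Y` and `P(Y > t)/(1 - F(t)) → 1` as `t → x_Y`. -/
theorem margTailCalibrated_iff_of_nonrandom
    {Ω : Type*} {m0 : MeasurableSpace Ω} (μ : Measure Ω) [IsProbabilityMeasure μ]
    (Y : Ω → ℝ) (hY : Measurable Y)
    (F : ℝ → ℝ) (hFmono : Monotone F) (hFcont : Continuous F)
    (hFtop : Tendsto F atTop (𝓝 1)) (hFbot : Tendsto F atBot (𝓝 0)) :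
    MargTailCalibrated μ (fun _ => F) Y ↔
      (cdfEndpoint F = upperEndpoint μ Y ∧
        Tendsto (fun t : ℝ => (μ {ω | t < Y ω}).toReal / (1 - F t))
          (toEndpoint (upperEndpoint μ Y)) (𝓝 1)) := by
  set e := upperEndpoint μ Y with he_def
  have hbot : (⊥:EReal) < e := mtc_bot_lt hY
  set g : ℝ → ℝ := fun t => (μ {ω | t < Y ω}).toReal with hg_def
  have hF_le_one : ∀ s : ℝ, F s ≤ 1 := fun s =>
    ge_of_tendsto hFtop (eventually_atTop.mpr ⟨s, fun b hb => hFmono hb⟩)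
  have hg_nonneg : ∀ s : ℝ, 0 ≤ g s := fun s => ENNReal.toReal_nonneg
  have hg_mono : Antitone g := by
    intro s s' hss'
    exact ENNReal.toReal_le_toReal (measure_ne_top μ _) (measure_ne_top μ _) |>.mpr
      (measure_mono fun ω (h : s' < Y ω) => show s < Y ω from lt_of_le_of_lt hss' h)
  have hg_zero : ∀ s : ℝ, e ≤ (s:EReal) → g s = 0 := by
    intro s hs
    simp only [hg_def, mtc_mu_zero hY hs, ENNReal.toReal_zero]
  -- cdf endpoint facts
  have hFlt_cdf : ∀ t : ℝ, (t:EReal) < cdfEndpoint F → F t < 1 := by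
    intro t ht
    rw [cdfEndpoint, lt_sSup_iff] at ht
    obtain ⟨b, ⟨c, hc, rfl⟩, htc⟩ := ht
    exact lt_of_le_of_lt (hFmono (EReal.coe_lt_coe_iff.mp htc).le) hc
  have hlt_cdf : ∀ x : ℝ, F x < 1 → (x:EReal) < cdfEndpoint F := by
    intro x hx
    have hopen : IsOpen {y : ℝ | F y < 1} := isOpen_lt hFcont continuous_const
    obtain ⟨ε, hε, hball⟩ := Metric.mem_nhds_iff.mp (hopen.mem_nhds hx)
    have hmem : F (x + ε/2) < 1 := hball (by
      simp only [Metric.mem_ball, Real.dist_eq, add_sub_cancel_left]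
      rw [abs_of_pos (by linarith)]; linarith)
    refine lt_of_lt_of_le ?_ (le_sSup ⟨x + ε/2, hmem, rfl⟩)
    rw [EReal.coe_lt_coe_iff]; linarith
  have hFeq_one : ∀ s : ℝ, cdfEndpoint F ≤ (s:EReal) → F s = 1 := by
    intro s hs
    by_contra h
    exact absurd (hlt_cdf s (lt_of_le_of_ne (hF_le_one s) h)) (not_lt.mpr hs)
  -- integral identities
  have hconst : ∀ t : ℝ, (∫ _ : Ω, (1 - F t) ∂μ) = 1 - F t := by
    intro t; simp [integral_const]
  have hgsub : ∀ t x : ℝ, 0 ≤ x →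
      (μ {ω | t < Y ω ∧ Y ω ≤ t + x}).toReal = g t - g (t + x) := by
    intro t x hx
    have hsub : {ω | t + x < Y ω} ⊆ {ω | t < Y ω} :=
      fun ω h => show t < Y ω from lt_of_le_of_lt (by linarith) h
    have hset : {ω | t < Y ω ∧ Y ω ≤ t + x} = {ω | t < Y ω} \ {ω | t + x < Y ω} := by
      ext ω; simp only [mem_setOf_eq, mem_diff, not_lt]
    rw [hset, measure_diff hsub (hY measurableSet_Ioi).nullMeasurableSet (measure_ne_top μ _),
      ENNReal.toReal_sub_of_le (measure_mono hsub) (measure_ne_top μ _)]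
  set B : ℝ → ℝ → ℝ := fun t x => |(g t - g (t + x))/(1 - F t) - excessCdf F t x| with hB_def
  have hex_mem : ∀ t x : ℝ, F t < 1 → 0 ≤ x → excessCdf F t x ∈ Icc (0:ℝ) 1 := by
    intro t x h1 hx
    rw [excessCdf, if_pos h1]
    constructor
    · exact div_nonneg (sub_nonneg.mpr (hFmono (by linarith))) (by linarith)
    · rw [div_le_one (by linarith)]
      have := hF_le_one (x + t); linarith
  have hBbd : ∀ t : ℝ, F t < 1 → BddAbove (range fun x : Ici (0:ℝ) => B t ↑x) := by
    intro t h1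
    have hpos : (0:ℝ) < 1 - F t := by linarith
    refine ⟨g t / (1 - F t) + 1, ?_⟩
    rintro y ⟨⟨x, hx⟩, rfl⟩
    have hx' : (0:ℝ) ≤ x := hx
    obtain ⟨he1, he2⟩ := hex_mem t x h1 hx'
    have hg1 : 0 ≤ g (t + x) := hg_nonneg _
    have hg2 : g (t + x) ≤ g t := hg_mono (by linarith : t ≤ t + x)
    have hA1 : (g t - g (t+x))/(1-F t) ≤ g t/(1-F t) := by gcongr; linarith
    have hA0 : 0 ≤ (g t - g (t+x))/(1-F t) := div_nonneg (by linarith) hpos.le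
    simp only [hB_def]
    rw [abs_sub_le_iff]
    constructor <;> linarith
  -- the sup congruence
  have hSeq : ∀ t : ℝ, F t < 1 → μ {ω' | t < Y ω'} ≠ 0 →
      (⨆ x : Ici (0:ℝ),
          |(μ {ω | t < Y ω ∧ Y ω ≤ t + (x:ℝ)}).toReal / (∫ _ : Ω, (1 - F t) ∂μ) -
            (∫ _ in {ω' | t < Y ω'}, excessCdf F t (x:ℝ) ∂μ) / (μ {ω' | t < Y ω'}).toReal|)
        = ⨆ x : Ici (0:ℝ), B t ↑x := by
    intro t h1 h2
    apply iSup_congr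
    rintro ⟨x, hx⟩
    have e1 : (μ {ω | t < Y ω ∧ Y ω ≤ t + x}).toReal / (∫ _ : Ω, (1 - F t) ∂μ)
        = (g t - g (t+x))/(1 - F t) := by rw [hconst, hgsub t x hx]
    have e2 : (∫ _ in {ω' | t < Y ω'}, excessCdf F t x ∂μ) / (μ {ω' | t < Y ω'}).toReal
        = excessCdf F t x := by
      rw [setIntegral_const, smul_eq_mul]
      exact mul_div_cancel_left₀ _ (ENNReal.toReal_ne_zero.mpr ⟨h2, measure_ne_top μ _⟩)
    simp only [hB_def]
    rw [e1, e2]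
  have hev_lt : ∀ᶠ t : ℝ in toEndpoint e, (t : EReal) < e :=
    eventually_iff.mpr (preimage_mem_comap self_mem_nhdsWithin)
  constructor
  · rintro ⟨hc1, hc2⟩
    have hFlt : ∀ t : ℝ, (t:EReal) < e → F t < 1 := by
      intro t ht
      have := hc1 t ht
      rw [hconst t] at this
      linarith
    have hS : Tendsto (fun t => ⨆ x : Ici (0:ℝ), B t ↑x) (toEndpoint e) (𝓝 0) := by
      apply hc2.congr'
      filter_upwards [hev_lt] with t ht
      exact hSeq t (hFlt t ht) (mtc_mu_pos hY ht)
    -- R → 1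
    have hRsub : ∀ᶠ t : ℝ in toEndpoint e,
        ‖g t / (1 - F t) - 1‖ ≤ ⨆ x : Ici (0:ℝ), B t ↑x := by
      filter_upwards [hev_lt] with t ht
      have h1 : F t < 1 := hFlt t ht
      have hpos : (0:ℝ) < 1 - F t := by linarith
      have hinter2 : (⋂ n : ℕ, {ω | t + (n:ℝ) < Y ω}) = ∅ := by
        ext ω
        simp only [mem_iInter, mem_setOf_eq, mem_empty_iff_false, iff_false, not_forall, not_lt]
        obtain ⟨n, hn⟩ := exists_nat_gt (Y ω - t)
        exact ⟨n, by linarith⟩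
      have hμn : Tendsto (fun n : ℕ => μ {ω | t + (n:ℝ) < Y ω}) atTop
          (𝓝 (μ (⋂ n : ℕ, {ω | t + (n:ℝ) < Y ω}))) :=
        tendsto_measure_iInter_atTop (fun n => (hY measurableSet_Ioi).nullMeasurableSet)
          (fun n m hnm ω h => show t + (n:ℝ) < Y ω from
            lt_of_le_of_lt (add_le_add_right (Nat.cast_le.mpr hnm) t)
              (show t + (m:ℝ) < Y ω from h))
          ⟨0, measure_ne_top μ _⟩
      rw [hinter2, measure_empty] at hμn
      have hA : Tendsto (fun n : ℕ => g (t + (n:ℝ))) atTop (𝓝 0) := by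
        have := (ENNReal.tendsto_toReal (show (0:ENNReal) ≠ ⊤ by norm_num)).comp hμn
        simp only [ENNReal.toReal_zero] at this
        exact this
      have hFn : Tendsto (fun n : ℕ => F ((n:ℝ) + t)) atTop (𝓝 1) :=
        hFtop.comp (tendsto_atTop_add_const_right atTop t tendsto_natCast_atTop_atTop)
      have hB1 : Tendsto (fun n : ℕ => excessCdf F t (n:ℝ)) atTop (𝓝 1) := by
        have h' : Tendsto (fun n : ℕ => (F ((n:ℝ) + t) - F t)/(1 - F t)) atTop
            (𝓝 ((1 - F t)/(1 - F t))) := (hFn.sub tendsto_const_nhds).div_const _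
        rw [div_self hpos.ne'] at h'
        exact h'.congr fun n => by rw [excessCdf, if_pos h1]
      have hlim : Tendsto (fun n : ℕ => B t (n:ℝ)) atTop (𝓝 |g t/(1 - F t) - 1|) := by
        have hinner : Tendsto (fun n : ℕ => (g t - g (t + (n:ℝ)))/(1 - F t) -
            excessCdf F t (n:ℝ)) atTop (𝓝 ((g t - 0)/(1 - F t) - 1)) :=
          ((tendsto_const_nhds.sub hA).div_const _).sub hB1
        rw [sub_zero] at hinner
        exact (continuous_abs.tendsto _).comp hinner
      rw [Real.norm_eq_abs]
      exact le_of_tendsto hlim (Eventually.of_forall fun n =>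
        le_ciSup (hBbd t h1) ⟨(n:ℝ), mem_Ici.mpr (Nat.cast_nonneg n)⟩)
    have hR0 : Tendsto (fun t => g t / (1 - F t) - 1) (toEndpoint e) (𝓝 0) :=
      squeeze_zero_norm' hRsub hS
    have hR : Tendsto (fun t => g t / (1 - F t)) (toEndpoint e) (𝓝 1) := by
      have := hR0.add (tendsto_const_nhds (x := (1:ℝ)))
      simpa using this
    refine ⟨le_antisymm ?_ ?_, hR⟩
    · -- cdfEndpoint ≤ e
      by_contra hlt
      push_neg at hlt
      have hlt' : e < cdfEndpoint F := hlt
      have he_ne_top : e ≠ ⊤ := fun h => not_top_lt (h ▸ hlt')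
      have he_ne_bot : e ≠ ⊥ := hbot.ne'
      set y := e.toReal with hy_def
      have hcoe : (y : EReal) = e := EReal.coe_toReal he_ne_top he_ne_bot
      obtain ⟨b, ⟨c, hc, rfl⟩, hec⟩ := lt_sSup_iff.mp hlt'
      have hyc : y < c := by rw [← EReal.coe_lt_coe_iff, hcoe]; exact hec
      have hL : 𝓝[<] y ≤ toEndpoint e := hcoe ▸ mtc_nhdsLT_le y
      set x₀ := c - y with hx0_def
      have hx0 : 0 < x₀ := by simp only [hx0_def]; linarith
      have hFylt : ∀ t : ℝ, t < y → F t < 1 := by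
        intro t ht
        exact hFlt t (by rw [← hcoe, EReal.coe_lt_coe_iff]; exact ht)
      have hEv : ∀ᶠ t in 𝓝[<] y, 2*y - c < t ∧ t < y := by
        filter_upwards [Ioo_mem_nhdsLT (show 2*y - c < y by linarith)] with t ht
        exact ⟨ht.1, ht.2⟩
      set q : ℝ → ℝ := fun t => (F (x₀ + t) - F t)/(1 - F t) with hq_def
      have hq_ev : ∀ᶠ t in 𝓝[<] y,
          ‖g t / (1 - F t) - q t‖ ≤ ⨆ x : Ici (0:ℝ), B t ↑x := by
        filter_upwards [hEv] with t ht
        obtain ⟨ht1, ht2⟩ := ht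
        have h1 : F t < 1 := hFylt t ht2
        have hgz : g (t + x₀) = 0 := by
          apply hg_zero
          rw [← hcoe, EReal.coe_le_coe_iff]
          simp only [hx0_def]
          linarith
        have hBx : B t x₀ = ‖g t / (1 - F t) - q t‖ := by
          simp only [hB_def, hq_def, Real.norm_eq_abs]
          rw [hgz, sub_zero, excessCdf, if_pos h1]
        rw [← hBx]
        exact le_ciSup (hBbd t h1) ⟨x₀, mem_Ici.mpr hx0.le⟩
      have hq0 : Tendsto (fun t => g t/(1 - F t) - q t) (𝓝[<] y) (𝓝 0) :=
        squeeze_zero_norm' hq_ev (hS.mono_left hL)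
      have hq1 : Tendsto q (𝓝[<] y) (𝓝 1) := by
        have h' := (hR.mono_left hL).sub hq0
        rw [sub_zero] at h'
        exact h'.congr fun t => by ring
      have hFy : F y < 1 := lt_of_le_of_lt (hFmono hyc.le) hc
      have hcont : ContinuousAt q y := by
        apply ContinuousAt.div
        · exact ((hFcont.comp (continuous_const.add continuous_id)).sub hFcont).continuousAt
        · exact (continuous_const.sub hFcont).continuousAt
        · show (1:ℝ) - F y ≠ 0
          linarith
      have hqc : Tendsto q (𝓝[<] y) (𝓝 (q y)) := hcont.tendsto.mono_left nhdsWithin_le_nhds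
      have hq_eq : q y = 1 := tendsto_nhds_unique hqc hq1
      have hFc1 : F c = 1 := by
        have hcy : x₀ + y = c := by simp only [hx0_def]; ring
        simp only [hq_def] at hq_eq
        rw [hcy] at hq_eq
        have := (div_eq_one_iff_eq (by linarith : (1:ℝ) - F y ≠ 0)).mp hq_eq
        linarith
      have hc' : F c < 1 := hc
      linarith
    · -- e ≤ cdfEndpoint
      apply sSup_le
      rintro b ⟨x, hx, rfl⟩
      have hxe : (x:EReal) < e := (mtc_lt_upperEndpoint_iff hY).mpr hx
      exact le_sSup ⟨x, hFlt x hxe, rfl⟩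
  · rintro ⟨hend, hR⟩
    have hFlt : ∀ t : ℝ, (t:EReal) < e → F t < 1 :=
      fun t ht => hFlt_cdf t (hend ▸ ht)
    constructor
    · intro t ht
      rw [hconst t]
      have := hFlt t ht
      linarith
    · -- main tendsto
      have hS : Tendsto (fun t => ⨆ x : Ici (0:ℝ), B t ↑x) (toEndpoint e) (𝓝 0) := by
        rw [Metric.tendsto_nhds]
        intro ε hε
        have hR' := Metric.tendsto_nhds.mp hR (ε/4) (by linarith)
        rw [mtc_eventually_toEndpoint hbot] at hR'
        obtain ⟨a, ha, hRa⟩ := hR'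
        rw [mtc_eventually_toEndpoint hbot]
        refine ⟨a, ha, ?_⟩
        intro t hat hte
        have h1 : F t < 1 := hFlt t hte
        have hpos : (0:ℝ) < 1 - F t := by linarith
        have hRt : |g t / (1 - F t) - 1| < ε/4 := by
          have := hRa t hat hte
          rwa [Real.dist_eq] at this
        have claim : ∀ x : ℝ, 0 ≤ x → B t x ≤ ε/2 := by
          intro x hx
          have hDt : |g t - (1 - F t)| ≤ ε/4 * (1 - F t) := by
            have heq : g t - (1 - F t) = (g t / (1 - F t) - 1) * (1 - F t) := by
              field_simp
            rw [heq, abs_mul, abs_of_pos hpos]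
            exact mul_le_mul_of_nonneg_right hRt.le hpos.le
          have hDtx : |g (t+x) - (1 - F (t+x))| ≤ ε/4 * (1 - F t) := by
            rcases lt_or_ge ((t+x : ℝ) : EReal) e with hcase | hcase
            · have h1' : F (t+x) < 1 := hFlt _ hcase
              have hpos' : (0:ℝ) < 1 - F (t+x) := by linarith
              have hRtx : |g (t+x) / (1 - F (t+x)) - 1| < ε/4 := by
                have := hRa (t+x) (by linarith) hcase
                rwa [Real.dist_eq] at this
              have heq : g (t+x) - (1 - F (t+x)) =
                  (g (t+x) / (1 - F (t+x)) - 1) * (1 - F (t+x)) := by field_simp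
              rw [heq, abs_mul, abs_of_pos hpos']
              have hFm : F t ≤ F (t+x) := hFmono (by linarith)
              nlinarith [abs_nonneg (g (t+x) / (1 - F (t+x)) - 1)]
            · have hgz : g (t+x) = 0 := hg_zero _ hcase
              have hFz : F (t+x) = 1 := hFeq_one _ (hend ▸ hcase)
              rw [hgz, hFz]
              simp only [sub_self, sub_zero, zero_sub, abs_neg, abs_zero]
              positivity
          have hBeq : B t x = |(g t - (1 - F t)) - (g (t+x) - (1 - F (t+x)))| / (1 - F t) := by
            simp only [hB_def]
            rw [excessCdf, if_pos h1, div_sub_div_same, abs_div, abs_of_pos hpos]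
            congr 2
            rw [add_comm x t]
            ring
          rw [hBeq]
          rw [div_le_iff₀ hpos]
          calc |(g t - (1 - F t)) - (g (t+x) - (1 - F (t+x)))|
              ≤ |g t - (1 - F t)| + |g (t+x) - (1 - F (t+x))| := abs_sub _ _
            _ ≤ ε/4 * (1 - F t) + ε/4 * (1 - F t) := add_le_add hDt hDtx
            _ = ε/2 * (1 - F t) := by ring
        have hbd : BddAbove (range fun x : Ici (0:ℝ) => B t ↑x) :=
          ⟨ε/2, by rintro y ⟨⟨x, hx⟩, rfl⟩; exact claim x hx⟩
        have hSle : (⨆ x : Ici (0:ℝ), B t ↑x) ≤ ε/2 :=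
          ciSup_le fun ⟨x, hx⟩ => claim x hx
        have hS0 : 0 ≤ ⨆ x : Ici (0:ℝ), B t ↑x :=
          le_trans (abs_nonneg _) (le_ciSup hbd ⟨0, self_mem_Ici⟩)
        rw [Real.dist_eq, sub_zero, abs_of_nonneg hS0]
        linarith
      apply hS.congr'
      filter_upwards [hev_lt] with t ht
      exact (hSeq t (hFlt t ht) (mtc_mu_pos hY ht)).symm
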